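/- Let k ≥ 2 be an integer and let a be a positive integer with a + k − 1 odd. Then every x ∈ {−1,1}^k with x₁ = −1 and a·x₁ + Σ_{i=2}^k x_i ≥ 1 satisfies 2·Σ_{2≤i<j≤k} x_i·x_j ≥ a² + 2a − k + 2. (In particular, writing a = δk and E = δ²k²/2 − k/2 + 1, every satisfying assignment with x₁ = −1 has Σ_{2≤i<j≤k} x_i·x_j ≥ E + a, i.e. Δ ≥ 0 when E > 0.) -/

import Mathlib

lemma key_sq_sum (f : ℕ → ℤ) (n : ℕ) :
    (∑ i ∈ Finset.Icc 2 n, f i) ^ 2 =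
      (∑ i ∈ Finset.Icc 2 n, (f i) ^ 2) +
        2 * ∑ i ∈ Finset.Icc 2 n, ∑ j ∈ Finset.Icc (i + 1) n, f i * f j := by
  induction n with
  | zero => simp
  | succ n ih =>
    rcases Nat.lt_or_ge n 1 with h | h
    · interval_cases n; simp
    · have h2 : 2 ≤ n + 1 := by omega
      rw [Finset.sum_Icc_succ_top h2, Finset.sum_Icc_succ_top h2, Finset.sum_Icc_succ_top h2]
      have hin : ∀ i ∈ Finset.Icc 2 n,
          (∑ j ∈ Finset.Icc (i + 1) (n + 1), f i * f j) =
            (∑ j ∈ Finset.Icc (i + 1) n, f i * f j) + f i * f (n + 1) := by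
        intro i hi
        simp only [Finset.mem_Icc] at hi
        rw [Finset.sum_Icc_succ_top (by omega)]
      rw [Finset.sum_congr rfl hin, Finset.sum_add_distrib]
      have hempty : Finset.Icc (n + 1 + 1) (n + 1) = ∅ := by
        apply Finset.Icc_eq_empty; omega
      rw [hempty, Finset.sum_empty, ← Finset.sum_mul]
      ring_nf at ih ⊢
      nlinarith [ih]

/-- Let `k ≥ 2` and let `a` be a positive integer with `a + k − 1` odd. Every
`x ∈ {−1,1}^k` (indices `1,…,k`) with `x 1 = −1` and `a·x₁ + Σ_{i=2}^k x_i ≥ 1`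
satisfies `2·Σ_{2≤i<j≤k} x_i x_j ≥ a² + 2a − k + 2`. -/
theorem stmt_12 (k : ℕ) (hk : 2 ≤ k) (a : ℤ) (ha : 0 < a) (hodd : Odd (a + (k : ℤ) - 1))
    (x : ℕ → ℤ) (hx : ∀ i ∈ Finset.Icc 1 k, x i = 1 ∨ x i = -1)
    (hx1 : x 1 = -1) (hsat : 1 ≤ a * x 1 + ∑ i ∈ Finset.Icc 2 k, x i) :
    a ^ 2 + 2 * a - (k : ℤ) + 2 ≤ 2 * ∑ i ∈ Finset.Icc 2 k, ∑ j ∈ Finset.Icc (i + 1) k, x i * x j := by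
  set S := ∑ i ∈ Finset.Icc 2 k, x i with hS
  have hsq : ∀ i ∈ Finset.Icc 2 k, (x i) ^ 2 = 1 := by
    intro i hi
    simp only [Finset.mem_Icc] at hi
    rcases hx i (Finset.mem_Icc.mpr ⟨by omega, hi.2⟩) with h | h <;> rw [h] <;> ring
  have hsum_sq : (∑ i ∈ Finset.Icc 2 k, (x i) ^ 2) = (k : ℤ) - 1 := by
    rw [Finset.sum_congr rfl hsq, Finset.sum_const, Nat.card_Icc]
    simp; omega
  have hkey := key_sq_sum x k
  rw [hsum_sq] at hkey
  have hSa : a + 1 ≤ S := by rw [hx1] at hsat; linarith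
  have : (a + 1) ^ 2 ≤ S ^ 2 := by nlinarith
  linarith [hkey]
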